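/- Let Π be a ground logic program over atoms A with rules indexed by a finite type R, and let T(Π) be its transformed program over A ⊎ R. If M' ⊆ A ⊎ R is a stable model of T(Π), then for every original atom a ∈ M' ∩ A there exists a rule r of Π with head(r) = a whose body is true in M' ∩ A, i.e. body⁺(r) ⊆ M' ∩ A and body⁻(r) ∩ (M' ∩ A) = ∅. -/
import Mathlib


/-- A ground rule: head ← body⁺, not body⁻. -/
structure Rule (A : Type*) where
  head : A
  bodyPos : Finset A
  bodyNeg : Finset A
deriving DecidableEq

/-- The body of rule `r` is true in interpretation `M`:
`body⁺(r) ⊆ M` and `body⁻(r) ∩ M = ∅`. -/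
def BodyTrue {A : Type*} (M : Set A) (r : Rule A) : Prop :=
  ↑r.bodyPos ⊆ M ∧ ∀ a ∈ r.bodyNeg, a ∉ M

/-- `M` is a model of the program `P` (a family of rules indexed by `R`). -/
def IsModel {A R : Type*} (P : R → Rule A) (M : Set A) : Prop :=
  ∀ r, BodyTrue M (P r) → (P r).head ∈ M

/-- `M` is a supported model of `P`: a model in which every true atom
is the head of some rule of `P` whose body is true in `M`. -/
def IsSupported {A R : Type*} (P : R → Rule A) (M : Set A) : Prop :=
  IsModel P M ∧ ∀ a ∈ M, ∃ r, (P r).head = a ∧ ↑(P r).bodyPos ⊆ M ∧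
    ∀ b ∈ (P r).bodyNeg, b ∉ M

/-- `N` is a model of the Gelfond–Lifschitz reduct `P^M`: for every rule of `P`
surviving the reduct (i.e. with `body⁻(r) ∩ M = ∅`), whose negative literals are
removed, if its positive body holds in `N` then so does its head. -/
def ReductModel {A R : Type*} (P : R → Rule A) (M N : Set A) : Prop :=
  ∀ r, (∀ a ∈ (P r).bodyNeg, a ∉ M) → ↑(P r).bodyPos ⊆ N → (P r).head ∈ N

/-- `M` is a stable model of `P`: `M` is the least model of the reduct `P^M`. -/
def IsStable {A R : Type*} (P : R → Rule A) (M : Set A) : Prop :=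
  ReductModel P M M ∧ ∀ N, ReductModel P M N → M ⊆ N

/-- Index type for the rules of the transformed program `T(P)`: one rule
`head(r) ← not dm_r` per rule `r`, one rule `dm_r ← not l` per `l ∈ body⁺(r)`,
and one rule `dm_r ← l` per `l ∈ body⁻(r)`. -/
abbrev TransIdx {A R : Type*} (P : R → Rule A) : Type _ :=
  R ⊕ ((Σ r : R, {l // l ∈ (P r).bodyPos}) ⊕ (Σ r : R, {l // l ∈ (P r).bodyNeg}))

/-- The transformed program `T(P)` over atoms `A ⊕ R`, where `Sum.inr r`
plays the role of the fresh auxiliary atom `dm_r`. -/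
def Transform {A R : Type*} (P : R → Rule A) : TransIdx P → Rule (A ⊕ R)
  | Sum.inl r => ⟨Sum.inl (P r).head, ∅, {Sum.inr r}⟩
  | Sum.inr (Sum.inl ⟨r, l⟩) => ⟨Sum.inr r, ∅, {Sum.inl l.1}⟩
  | Sum.inr (Sum.inr ⟨r, l⟩) => ⟨Sum.inr r, {Sum.inl l.1}, ∅⟩

/-- `Lift P M = M ∪ { dm_r | the body of rule r is false in M }`,
viewing `M ⊆ A` as a subset of `A ⊕ R` via the left injection. -/
def Lift {A R : Type*} (P : R → Rule A) (M : Set A) : Set (A ⊕ R) :=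
  Sum.inl '' M ∪ Sum.inr '' {r | ¬ BodyTrue M (P r)}

/-- If `M'` is a stable model of `T(P)`, then every original atom
`a ∈ M' ∩ A` is the head of some rule of `P` whose body is true in `M' ∩ A`. -/
theorem stable_model_of_transform_atoms_supported
    {A R : Type*} [Fintype R] (P : R → Rule A) (M' : Set (A ⊕ R))
    (h : IsStable (Transform P) M') :
    ∀ a ∈ Sum.inl ⁻¹' M', ∃ r, (P r).head = a ∧
      ↑(P r).bodyPos ⊆ Sum.inl ⁻¹' M' ∧
      ∀ b ∈ (P r).bodyNeg, b ∉ Sum.inl ⁻¹' M' := by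
  obtain ⟨hred, hmin⟩ := h
  intro a ha
  by_contra hno
  have key : ∀ r : R, (P r).head = a → Sum.inr r ∈ M' := by
    intro r hr
    by_contra hnr
    have hpos : ∀ l ∈ (P r).bodyPos, Sum.inl l ∈ M' := by
      intro l hl
      by_contra hll
      exact hnr (hred (Sum.inr (Sum.inl ⟨r, ⟨l, hl⟩⟩))
        (by simp [Transform, hll]) (by simp [Transform]))
    have hneg : ∀ l ∈ (P r).bodyNeg, Sum.inl l ∉ M' := by
      intro l hl hll
      exact hnr (hred (Sum.inr (Sum.inr ⟨r, ⟨l, hl⟩⟩))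
        (by simp [Transform]) (by simp [Transform, hll]))
    exact hno ⟨r, hr, fun l hl => hpos l (by exact_mod_cast hl),
      fun b hb => hneg b hb⟩
  have hN : ReductModel (Transform P) M' (M' \ {Sum.inl a}) := by
    intro s hsneg hspos
    match s with
    | Sum.inl r =>
      have hm : Sum.inl (P r).head ∈ M' := hred (Sum.inl r) hsneg (by simp [Transform])
      refine ⟨hm, ?_⟩
      simp only [Transform, Set.mem_singleton_iff, Sum.inl.injEq]
      intro heq
      exact (hsneg (Sum.inr r) (by simp [Transform])) (key r heq)
    | Sum.inr (Sum.inl ⟨r, l⟩) =>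
      exact ⟨hred _ hsneg (fun _ hx => (hspos hx).1), by simp [Transform]⟩
    | Sum.inr (Sum.inr ⟨r, l⟩) =>
      exact ⟨hred _ hsneg (fun _ hx => (hspos hx).1), by simp [Transform]⟩
  exact (hmin _ hN ha).2 rfl
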